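/- Let α, β ∈ (0,1) and k₁, k₂, k₃, k₄ ∈ ℝ. Then the pair u₁(x,t) = k₁ + k₄ Γ(β+1) t^α/Γ(α+1) - k₂² (Γ(β+1))² t^{2α}/Γ(2α+1) + k₂ x^β, u₂(x,t) = k₃ - k₁ k₂ Γ(β+1) t^α/Γ(α+1) - k₂ k₄ (Γ(β+1))² t^{2α}/Γ(2α+1) + k₂³ (Γ(β+1))³ t^{3α}/Γ(3α+1) + (k₄ - k₂² Γ(β+1) t^α/Γ(α+1)) x^β is an exact solution of the two-coupled system of time-space fractional PDEs modeling stationary transonic plane-parallel gas flow: for all x > 0 and t > 0, (C_t^α u₁)(x,t) = (C_x^β u₂)(x,t) and (C_t^α u₂)(x,t) = -u₁(x,t) (C_x^β u₁)(x,t). -/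

import Mathlib

open MeasureTheory Set

lemma beta_integrable {p q t : ℝ} (hp : 0 < p) (hq : 0 < q) (ht : 0 < t) :
    IntervalIntegrable (fun s => s ^ (p - 1) * (t - s) ^ (q - 1)) volume 0 t := by
  have h1 : IntervalIntegrable (fun s => s ^ (p - 1) * (t - s) ^ (q - 1)) volume 0 (t / 2) := by
    apply IntervalIntegrable.mul_continuousOn
    · exact intervalIntegral.intervalIntegrable_rpow' (by linarith)
    · apply ContinuousOn.rpow_const ((continuous_const.sub continuous_id).continuousOn)
      intro s hs
      rw [Set.uIcc_of_le (by linarith : (0:ℝ) ≤ t / 2)] at hs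
      exact Or.inl (by intro h; have h' : t - s = 0 := h; nlinarith [hs.2])
  have h2' : IntervalIntegrable (fun s => (t - s) ^ (q - 1)) volume (t / 2) t := by
    have := (intervalIntegral.intervalIntegrable_rpow' (a := t / 2) (b := 0)
      (by linarith : (-1:ℝ) < q - 1)).comp_sub_left t
    rw [show t - t / 2 = t / 2 by ring, sub_zero] at this
    exact this
  have h2 : IntervalIntegrable (fun s => s ^ (p - 1) * (t - s) ^ (q - 1)) volume (t / 2) t := by
    apply IntervalIntegrable.continuousOn_mul h2'
    apply ContinuousOn.rpow_const continuousOn_id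
    intro s hs
    rw [Set.uIcc_of_le (by linarith : t / 2 ≤ t)] at hs
    exact Or.inl (by simp only [id_eq]; intro h; nlinarith [hs.1])
  exact h1.trans h2

lemma beta_eval {p q t : ℝ} (hp : 0 < p) (hq : 0 < q) (ht : 0 < t) :
    ∫ s in (0:ℝ)..t, s ^ (p - 1) * (t - s) ^ (q - 1) =
      Real.Gamma p * Real.Gamma q / Real.Gamma (p + q) * t ^ (p + q - 1) := by
  have hC := Complex.betaIntegral_scaled (p : ℂ) (q : ℂ) ht
  have hG := Complex.Gamma_mul_Gamma_eq_betaIntegral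
    (s := (p:ℂ)) (t := (q:ℂ)) (by simpa using hp) (by simpa using hq)
  have hne : Complex.Gamma ((p:ℂ) + q) ≠ 0 := by
    rw [show ((p:ℂ) + q) = ((p + q : ℝ) : ℂ) by push_cast; ring, Complex.Gamma_ofReal]
    exact_mod_cast (Real.Gamma_pos_of_pos (by linarith)).ne'
  have hbeta : Complex.betaIntegral p q = Complex.Gamma p * Complex.Gamma q / Complex.Gamma ((p:ℂ) + q) := by
    rw [eq_div_iff hne, hG]; ring
  have key : ∫ s in (0:ℝ)..t, ((s:ℂ)) ^ ((p:ℂ) - 1) * ((t:ℂ) - s) ^ ((q:ℂ) - 1)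
      = ((∫ s in (0:ℝ)..t, s ^ (p - 1) * (t - s) ^ (q - 1) : ℝ) : ℂ) := by
    rw [← intervalIntegral.integral_ofReal]
    refine intervalIntegral.integral_congr fun s hs => ?_
    rw [Set.uIcc_of_le ht.le] at hs
    have h1 := Complex.ofReal_cpow hs.1 (p - 1)
    have h2 := Complex.ofReal_cpow (sub_nonneg.2 hs.2) (q - 1)
    push_cast at h1 h2
    rw [Complex.ofReal_mul, ← h1, ← h2]
  rw [key, hbeta] at hC
  rw [show ((p:ℂ) + q - 1) = ((p + q - 1 : ℝ) : ℂ) by push_cast; ring,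
    ← Complex.ofReal_cpow ht.le,
    show ((p:ℂ) + q) = ((p + q : ℝ) : ℂ) by push_cast; ring,
    Complex.Gamma_ofReal, Complex.Gamma_ofReal, Complex.Gamma_ofReal] at hC
  rw [show Real.Gamma p * Real.Gamma q / Real.Gamma (p + q) * t ^ (p + q - 1)
      = t ^ (p + q - 1) * (Real.Gamma p * Real.Gamma q / Real.Gamma (p + q)) by ring]
  exact_mod_cast hC

lemma beta_eval' {γ α t : ℝ} (hγ : 0 < γ) (hα : α < 1) (ht : 0 < t) :
    ∫ s in (0:ℝ)..t, s ^ (γ - 1) * (t - s) ^ (-α) =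
      Real.Gamma γ * Real.Gamma (1 - α) / Real.Gamma (γ + 1 - α) * t ^ (γ - α) := by
  have h := beta_eval hγ (show 0 < 1 - α by linarith) ht
  simp_rw [show (1:ℝ) - α - 1 = -α from by ring] at h
  rw [h, show γ + (1 - α) = γ + 1 - α from by ring, show γ + 1 - α - 1 = γ - α from by ring]

lemma beta_integrable' {γ α t : ℝ} (hγ : 0 < γ) (hα : α < 1) (ht : 0 < t) :
    IntervalIntegrable (fun s => s ^ (γ - 1) * (t - s) ^ (-α)) volume 0 t := by
  have h := beta_integrable hγ (show 0 < 1 - α by linarith) ht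
  simp_rw [show (1:ℝ) - α - 1 = -α from by ring] at h
  exact h

/-- Caputo fractional partial derivative of order `α` with respect to `t`. -/
noncomputable def caputoT (α : ℝ) (u : ℝ → ℝ → ℝ) : ℝ → ℝ → ℝ := fun x t =>
  (1 / Real.Gamma (1 - α)) * ∫ s in (0:ℝ)..t, deriv (fun s' => u x s') s * (t - s) ^ (-α)

/-- Caputo fractional partial derivative of order `β` with respect to `x`. -/
noncomputable def caputoX (β : ℝ) (u : ℝ → ℝ → ℝ) : ℝ → ℝ → ℝ := fun x t =>
  (1 / Real.Gamma (1 - β)) * ∫ y in (0:ℝ)..x, deriv (fun y' => u y' t) y * (x - y) ^ (-β)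


set_option maxHeartbeats 2000000 in
lemma caputoT_poly {α : ℝ} (hα : α ∈ Set.Ioo (0:ℝ) 1) (u : ℝ → ℝ → ℝ) (x t A B C D : ℝ)
    (ht : 0 < t) (hu : ∀ s, u x s = A + B * s ^ α + C * s ^ (2 * α) + D * s ^ (3 * α)) :
    caputoT α u x t = B * Real.Gamma (α + 1)
      + C * Real.Gamma (2 * α + 1) / Real.Gamma (α + 1) * t ^ α
      + D * Real.Gamma (3 * α + 1) / Real.Gamma (2 * α + 1) * t ^ (2 * α) := by
  obtain ⟨hα0, hα1⟩ := hα
  have h2α : (0:ℝ) < 2 * α := by linarith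
  have h3α : (0:ℝ) < 3 * α := by linarith
  unfold caputoT
  rw [show (fun s' => u x s') = fun s => A + B * s ^ α + C * s ^ (2 * α) + D * s ^ (3 * α)
    from funext hu]
  have hcong : ∫ s in (0:ℝ)..t,
        deriv (fun s => A + B * s ^ α + C * s ^ (2 * α) + D * s ^ (3 * α)) s * (t - s) ^ (-α)
      = ∫ s in (0:ℝ)..t,
        (B * α) * (s ^ (α - 1) * (t - s) ^ (-α)) + ((C * (2 * α)) * (s ^ (2 * α - 1) * (t - s) ^ (-α))
          + (D * (3 * α)) * (s ^ (3 * α - 1) * (t - s) ^ (-α))) := by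
    refine intervalIntegral.integral_congr_ae (Filter.Eventually.of_forall fun s hs => ?_)
    rw [Set.uIoc_of_le ht.le] at hs
    have h1 : HasDerivAt (fun y : ℝ => y ^ α) (α * s ^ (α - 1)) s :=
      Real.hasDerivAt_rpow_const (Or.inl hs.1.ne')
    have h2 : HasDerivAt (fun y : ℝ => y ^ (2 * α)) ((2 * α) * s ^ (2 * α - 1)) s :=
      Real.hasDerivAt_rpow_const (Or.inl hs.1.ne')
    have h3 : HasDerivAt (fun y : ℝ => y ^ (3 * α)) ((3 * α) * s ^ (3 * α - 1)) s :=
      Real.hasDerivAt_rpow_const (Or.inl hs.1.ne')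
    have hd := (((hasDerivAt_const s A).add (h1.const_mul B)).add (h2.const_mul C)).add
      (h3.const_mul D)
    rw [HasDerivAt.deriv (f := fun s => A + B * s ^ α + C * s ^ (2 * α) + D * s ^ (3 * α)) hd]; ring
  have I1 := (beta_integrable' hα0 hα1 ht).const_mul (B * α)
  have I2 := (beta_integrable' h2α hα1 ht).const_mul (C * (2 * α))
  have I3 := (beta_integrable' h3α hα1 ht).const_mul (D * (3 * α))
  rw [hcong, intervalIntegral.integral_add I1 (I2.add I3), intervalIntegral.integral_add I2 I3,
    intervalIntegral.integral_const_mul, intervalIntegral.integral_const_mul,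
    intervalIntegral.integral_const_mul, beta_eval' hα0 hα1 ht, beta_eval' h2α hα1 ht,
    beta_eval' h3α hα1 ht]
  rw [show α + 1 - α = 1 by ring, show α - α = 0 by ring, show 2 * α + 1 - α = α + 1 by ring,
      show 2 * α - α = α by ring, show 3 * α + 1 - α = 2 * α + 1 by ring,
      show 3 * α - α = 2 * α by ring, Real.rpow_zero, Real.Gamma_one,
      Real.Gamma_add_one hα0.ne', Real.Gamma_add_one h2α.ne', Real.Gamma_add_one h3α.ne']
  have g1 : Real.Gamma (1 - α) ≠ 0 := (Real.Gamma_pos_of_pos (by linarith)).ne'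
  have g2 : Real.Gamma α ≠ 0 := (Real.Gamma_pos_of_pos hα0).ne'
  have g3 : Real.Gamma (2 * α) ≠ 0 := (Real.Gamma_pos_of_pos h2α).ne'
  field_simp
  ring

lemma caputoX_poly {β : ℝ} (hβ : β ∈ Set.Ioo (0:ℝ) 1) (u : ℝ → ℝ → ℝ) (x t P Q : ℝ)
    (hx : 0 < x) (hu : ∀ y, u y t = P + Q * y ^ β) :
    caputoX β u x t = Q * Real.Gamma (β + 1) := by
  obtain ⟨hβ0, hβ1⟩ := hβ
  unfold caputoX
  rw [show (fun y' => u y' t) = fun y => P + Q * y ^ β from funext hu]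
  have hcong : ∫ y in (0:ℝ)..x, deriv (fun y => P + Q * y ^ β) y * (x - y) ^ (-β)
      = ∫ y in (0:ℝ)..x, (Q * β) * (y ^ (β - 1) * (x - y) ^ (-β)) := by
    refine intervalIntegral.integral_congr_ae (Filter.Eventually.of_forall fun y hy => ?_)
    rw [Set.uIoc_of_le hx.le] at hy
    have h1 : HasDerivAt (fun z : ℝ => z ^ β) (β * y ^ (β - 1)) y :=
      Real.hasDerivAt_rpow_const (Or.inl hy.1.ne')
    have hd := (hasDerivAt_const y P).add (h1.const_mul Q)
    rw [HasDerivAt.deriv (f := fun y => P + Q * y ^ β) hd]; ring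
  rw [hcong, intervalIntegral.integral_const_mul, beta_eval' hβ0 hβ1 hx,
    show β + 1 - β = 1 by ring, show β - β = 0 by ring, Real.rpow_zero, Real.Gamma_one,
    Real.Gamma_add_one hβ0.ne']
  have g1 : Real.Gamma (1 - β) ≠ 0 := (Real.Gamma_pos_of_pos (by linarith)).ne'
  field_simp

/-- The component
`u₁(x,t) = k₁ + k₄ Γ(β+1) t^α/Γ(α+1) - k₂² Γ(β+1)² t^(2α)/Γ(2α+1) + k₂ x^β`. -/
noncomputable def u1Sol (α β k₁ k₂ k₄ : ℝ) : ℝ → ℝ → ℝ := fun x t =>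
  k₁ + k₄ * Real.Gamma (β + 1) * t ^ α / Real.Gamma (α + 1)
    - k₂ ^ 2 * Real.Gamma (β + 1) ^ 2 * t ^ (2 * α) / Real.Gamma (2 * α + 1)
    + k₂ * x ^ β

/-- The component
`u₂(x,t) = k₃ - k₁k₂ Γ(β+1) t^α/Γ(α+1) - k₂k₄ Γ(β+1)² t^(2α)/Γ(2α+1)
           + k₂³ Γ(β+1)³ t^(3α)/Γ(3α+1) + (k₄ - k₂² Γ(β+1) t^α/Γ(α+1)) x^β`. -/
noncomputable def u2Sol (α β k₁ k₂ k₃ k₄ : ℝ) : ℝ → ℝ → ℝ := fun x t =>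
  k₃ - k₁ * k₂ * Real.Gamma (β + 1) * t ^ α / Real.Gamma (α + 1)
    - k₂ * k₄ * Real.Gamma (β + 1) ^ 2 * t ^ (2 * α) / Real.Gamma (2 * α + 1)
    + k₂ ^ 3 * Real.Gamma (β + 1) ^ 3 * t ^ (3 * α) / Real.Gamma (3 * α + 1)
    + (k₄ - k₂ ^ 2 * Real.Gamma (β + 1) * t ^ α / Real.Gamma (α + 1)) * x ^ β

/-- **Exact solution of the two-coupled system of time-space fractional PDEs modeling
stationary transonic plane-parallel gas flow**:
`C_t^α u₁ = C_x^β u₂` and `C_t^α u₂ = -u₁ C_x^β u₁` for all `x > 0`, `t > 0`. -/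
theorem fractional_gas_flow_exact (α β k₁ k₂ k₃ k₄ : ℝ)
    (hα : α ∈ Set.Ioo (0 : ℝ) 1) (hβ : β ∈ Set.Ioo (0 : ℝ) 1) :
    ∀ x : ℝ, 0 < x → ∀ t : ℝ, 0 < t →
      caputoT α (u1Sol α β k₁ k₂ k₄) x t = caputoX β (u2Sol α β k₁ k₂ k₃ k₄) x t ∧
      caputoT α (u2Sol α β k₁ k₂ k₃ k₄) x t =
        -u1Sol α β k₁ k₂ k₄ x t * caputoX β (u1Sol α β k₁ k₂ k₄) x t := by
  obtain ⟨hα0, hα1⟩ := hα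
  obtain ⟨hβ0, hβ1⟩ := hβ
  intro x hx t ht
  have gA : Real.Gamma (α + 1) ≠ 0 := (Real.Gamma_pos_of_pos (by linarith)).ne'
  have g2A : Real.Gamma (2 * α + 1) ≠ 0 := (Real.Gamma_pos_of_pos (by linarith)).ne'
  have g3A : Real.Gamma (3 * α + 1) ≠ 0 := (Real.Gamma_pos_of_pos (by linarith)).ne'
  constructor
  · rw [caputoT_poly ⟨hα0, hα1⟩ _ x t (k₁ + k₂ * x ^ β)
        (k₄ * Real.Gamma (β + 1) / Real.Gamma (α + 1))
        (-(k₂ ^ 2 * Real.Gamma (β + 1) ^ 2 / Real.Gamma (2 * α + 1))) 0 ht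
        (fun s => by simp only [u1Sol]; try ring),
      caputoX_poly ⟨hβ0, hβ1⟩ _ x t
        (k₃ - k₁ * k₂ * Real.Gamma (β + 1) * t ^ α / Real.Gamma (α + 1)
          - k₂ * k₄ * Real.Gamma (β + 1) ^ 2 * t ^ (2 * α) / Real.Gamma (2 * α + 1)
          + k₂ ^ 3 * Real.Gamma (β + 1) ^ 3 * t ^ (3 * α) / Real.Gamma (3 * α + 1))
        (k₄ - k₂ ^ 2 * Real.Gamma (β + 1) * t ^ α / Real.Gamma (α + 1)) hx
        (fun y => by simp only [u2Sol]; try ring)]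
    field_simp
    ring
  · rw [caputoT_poly ⟨hα0, hα1⟩ _ x t (k₃ + k₄ * x ^ β)
        (-(k₁ * k₂ * Real.Gamma (β + 1) / Real.Gamma (α + 1))
          - k₂ ^ 2 * Real.Gamma (β + 1) / Real.Gamma (α + 1) * x ^ β)
        (-(k₂ * k₄ * Real.Gamma (β + 1) ^ 2 / Real.Gamma (2 * α + 1)))
        (k₂ ^ 3 * Real.Gamma (β + 1) ^ 3 / Real.Gamma (3 * α + 1)) ht
        (fun s => by simp only [u2Sol]; try ring),
      caputoX_poly ⟨hβ0, hβ1⟩ _ x t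
        (k₁ + k₄ * Real.Gamma (β + 1) * t ^ α / Real.Gamma (α + 1)
          - k₂ ^ 2 * Real.Gamma (β + 1) ^ 2 * t ^ (2 * α) / Real.Gamma (2 * α + 1)) k₂ hx
        (fun y => by simp only [u1Sol]; try ring)]
    simp only [u1Sol]
    field_simp
    ring
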